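/- arXiv:1306.5015 — 2 statements merged into one kernel-verified Lean document; each statement's English description precedes it below -/
import Mathlib

section
/- Let d ≥ 1, α ∈ (0,2), β ∈ [0, α/2] and γ ∈ ℝ. Then there is a constant C > 0, depending only on d, α and β, such that for all t ∈ (0,1), ∫_{ℝ^d} ϱ^β_γ(t,x) dx ≤ C t^{(γ+β-α)/α}. -/
open MeasureTheory Real Filter Topology

/-- The function `ϱ^β_γ(t,x) = t^{γ/α} (|x|^β ∧ 1) (t^{1/α} + |x|)^{-d-α}`. -/
noncomputable def rho (d : ℕ) (α β γ : ℝ) (t : ℝ) (x : EuclideanSpace ℝ (Fin d)) : ℝ :=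
  t ^ (γ / α) * min (‖x‖ ^ β) 1 * (t ^ (1 / α) + ‖x‖) ^ (-(d : ℝ) - α)

lemma g1_integrable (d : ℕ) (α β : ℝ) (hα0 : 0 < α) (hβ0 : 0 ≤ β) (hβα : β < α) :
    Integrable (fun y : EuclideanSpace ℝ (Fin d) => ‖y‖ ^ β * (1 + ‖y‖) ^ (-(d : ℝ) - α)) := by
  have hfin : (Module.finrank ℝ (EuclideanSpace ℝ (Fin d)) : ℝ) < (d : ℝ) + α - β := by
    rw [finrank_euclideanSpace_fin]; linarith
  have h := integrable_one_add_norm (μ := (volume : Measure (EuclideanSpace ℝ (Fin d)))) hfin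
  refine h.mono ?_ (ae_of_all _ fun y => ?_)
  · apply Measurable.aestronglyMeasurable
    fun_prop
  · have h1 : (0:ℝ) < 1 + ‖y‖ := by positivity
    have hle : ‖y‖ ^ β * (1 + ‖y‖) ^ (-(d : ℝ) - α) ≤ (1 + ‖y‖) ^ (-((d:ℝ) + α - β)) := by
      calc ‖y‖ ^ β * (1 + ‖y‖) ^ (-(d : ℝ) - α)
          ≤ (1 + ‖y‖) ^ β * (1 + ‖y‖) ^ (-(d : ℝ) - α) := by
            gcongr <;> linarith [norm_nonneg y]
        _ = (1 + ‖y‖) ^ (-((d:ℝ) + α - β)) := by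
            rw [← Real.rpow_add h1]; ring_nf
    rw [Real.norm_eq_abs, Real.norm_eq_abs, abs_of_nonneg (by positivity),
      abs_of_nonneg (by positivity)]
    exact hle

/-- for `β ∈ [0, α/2]` there is `C > 0`, depending only on `d, α, β`,
such that for all `γ ∈ ℝ` and `t ∈ (0,1)`,
`∫_{ℝ^d} ϱ^β_γ(t,x) dx ≤ C t^{(γ+β-α)/α}`. -/
theorem stmt0 (d : ℕ) (hd : 1 ≤ d) (α β : ℝ) (hα0 : 0 < α) (hα2 : α < 2)
    (hβ0 : 0 ≤ β) (hβ : β ≤ α / 2) :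
    ∃ C > 0, ∀ (γ t : ℝ), 0 < t → t < 1 →
      (∫ x : EuclideanSpace ℝ (Fin d), rho d α β γ t x) ≤ C * t ^ ((γ + β - α) / α) := by
  have hβα : β < α := lt_of_le_of_lt hβ (by linarith)
  set g₁ : EuclideanSpace ℝ (Fin d) → ℝ :=
    fun y => ‖y‖ ^ β * (1 + ‖y‖) ^ (-(d : ℝ) - α) with hg₁def
  have hg₁ : Integrable g₁ := g1_integrable d α β hα0 hβ0 hβα
  set I : ℝ := ∫ y, g₁ y with hI
  have hI0 : 0 ≤ I := integral_nonneg fun y => by positivity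
  refine ⟨I + 1, by linarith, fun γ t ht ht1 => ?_⟩
  set s : ℝ := t ^ (1 / α) with hs
  have hs0 : 0 < s := Real.rpow_pos_of_pos ht _
  set g : EuclideanSpace ℝ (Fin d) → ℝ :=
    fun x => ‖x‖ ^ β * (s + ‖x‖) ^ (-(d : ℝ) - α) with hgdef
  -- pointwise scaling identity
  have key : ∀ y : EuclideanSpace ℝ (Fin d), g (s • y) = s ^ (β - (d:ℝ) - α) * g₁ y := by
    intro y
    have hny : (0:ℝ) ≤ ‖y‖ := norm_nonneg y
    have h1y : (0:ℝ) < 1 + ‖y‖ := by positivity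
    simp only [hgdef, hg₁def, norm_smul, Real.norm_eq_abs, abs_of_pos hs0]
    rw [Real.mul_rpow hs0.le hny]
    have : s + s * ‖y‖ = s * (1 + ‖y‖) := by ring
    rw [this, Real.mul_rpow hs0.le h1y.le,
      show β - (d:ℝ) - α = β + (-(d:ℝ) - α) by ring, Real.rpow_add hs0]
    ring
  -- `g` is integrable
  have hg : Integrable g := by
    have h2 : Integrable (fun x : EuclideanSpace ℝ (Fin d) =>
        s ^ (β - (d:ℝ) - α) * g₁ (s⁻¹ • x)) :=
      (hg₁.comp_smul (inv_ne_zero hs0.ne')).const_mul _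
    refine h2.congr (ae_of_all _ fun x => ?_)
    have := key (s⁻¹ • x)
    rw [smul_smul, mul_inv_cancel₀ hs0.ne', one_smul] at this
    simpa using this.symm
  -- integral of `g`
  have hgint : (∫ x, g x) = s ^ (β - α) * I := by
    have h1 := MeasureTheory.Measure.integral_comp_smul_of_nonneg
      (volume : Measure (EuclideanSpace ℝ (Fin d))) g s (hR := hs0.le)
    rw [finrank_euclideanSpace_fin] at h1
    have h2 : (∫ x, g (s • x)) = s ^ (β - (d:ℝ) - α) * I := by
      simp_rw [key]
      rw [integral_const_mul]
    rw [h2, smul_eq_mul] at h1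
    have hne : ((s:ℝ) ^ (d:ℕ)) ≠ 0 := pow_ne_zero _ hs0.ne'
    have hpow : (s:ℝ) ^ (d:ℕ) * s ^ (β - (d:ℝ) - α) = s ^ (β - α) := by
      rw [← Real.rpow_natCast s d, ← Real.rpow_add hs0]
      congr 1
      ring
    have h3 : s ^ (d:ℕ) * (s ^ (β - (d:ℝ) - α) * I) = ∫ x, g x := by
      rw [h1, ← mul_assoc, mul_inv_cancel₀ hne, one_mul]
    rw [← h3, ← mul_assoc, hpow]
  -- main estimate
  have hmono : (∫ x : EuclideanSpace ℝ (Fin d), min (‖x‖ ^ β) 1 * (s + ‖x‖) ^ (-(d : ℝ) - α)) ≤ ∫ x, g x := by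
    refine integral_mono_of_nonneg (ae_of_all _ fun x => ?_) hg (ae_of_all _ fun x => ?_)
    · have : (0:ℝ) ≤ min (‖x‖ ^ β) 1 := le_min (by positivity) one_pos.le |>.trans_eq rfl
      positivity
    · exact mul_le_mul_of_nonneg_right (min_le_left _ _) (by positivity)
  have hrho : (∫ x : EuclideanSpace ℝ (Fin d), rho d α β γ t x)
      = t ^ (γ / α) * ∫ x : EuclideanSpace ℝ (Fin d), min (‖x‖ ^ β) 1 * (s + ‖x‖) ^ (-(d : ℝ) - α) := by
    rw [← integral_const_mul]
    congr 1 with x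
    simp [rho, hs, mul_assoc]
  have htγ : (0:ℝ) ≤ t ^ (γ / α) := (Real.rpow_pos_of_pos ht _).le
  have hsba : s ^ (β - α) = t ^ ((β - α) / α) := by
    rw [hs, ← Real.rpow_mul ht.le]
    congr 1
    field_simp
  calc (∫ x : EuclideanSpace ℝ (Fin d), rho d α β γ t x)
      = t ^ (γ / α) * ∫ x : EuclideanSpace ℝ (Fin d), min (‖x‖ ^ β) 1 * (s + ‖x‖) ^ (-(d : ℝ) - α) := hrho
    _ ≤ t ^ (γ / α) * ∫ x, g x := mul_le_mul_of_nonneg_left hmono htγ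
    _ = t ^ (γ / α) * (t ^ ((β - α) / α) * I) := by rw [hgint, hsba]
    _ ≤ t ^ (γ / α) * (t ^ ((β - α) / α) * (I + 1)) := by
        gcongr
        linarith
    _ = (I + 1) * t ^ ((γ + β - α) / α) := by
        have hexp : γ / α + (β - α) / α = (γ + β - α) / α := by
          field_simp
          ring
        rw [← mul_assoc, ← Real.rpow_add ht, hexp]
        ring
end

section
/- Let d ≥ 1, α ∈ (0,2), β₁, β₂ ∈ [0, α/4] and γ₁, γ₂ ∈ ℝ. Then there is a constant C > 0, depending only on d, α, β₁ and β₂, such that for all 0 < s < t ≤ 1 and x ∈ ℝ^d: ∫_{ℝ^d} ϱ^{β₁}_{γ₁}(t−s, x−z) ϱ^{β₂}_{γ₂}(s, z) dz ≤ C [ ( (t−s)^{(γ₁+β₁+β₂−α)/α} s^{γ₂/α} + (t−s)^{γ₁/α} s^{(γ₂+β₁+β₂−α)/α} ) ϱ^0_0(t,x) + (t−s)^{(γ₁+β₁−α)/α} s^{γ₂/α} ϱ^{β₂}_0(t,x) + (t−s)^{γ₁/α} s^{(γ₂+β₂−α)/α} ϱ^{β₁}_0(t,x) ]. -/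
set_option maxHeartbeats 1000000

open MeasureTheory Real Filter Topology Module

/-- The normalization constant `∫ (1+|w|)^{β-d-α} dw`. -/
noncomputable def Jconst (d : ℕ) (α β : ℝ) : ℝ :=
  ∫ w : EuclideanSpace ℝ (Fin d), (1 + ‖w‖) ^ (β - (d:ℝ) - α)

lemma Jconst_nonneg (d : ℕ) (α β : ℝ) : 0 ≤ Jconst d α β :=
  integral_nonneg fun w => Real.rpow_nonneg (by positivity) _

lemma min_rpow_subadd {β u v r : ℝ} (hβ0 : 0 ≤ β) (hβ1 : β ≤ 1) (hu : 0 ≤ u) (hv : 0 ≤ v)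
    (hr : 0 ≤ r) (h : r ≤ u + v) :
    min (r ^ β) 1 ≤ min (u ^ β) 1 + min (v ^ β) 1 := by
  have hvm : 0 ≤ min (v ^ β) 1 := le_min (Real.rpow_nonneg hv β) zero_le_one
  have hum : 0 ≤ min (u ^ β) 1 := le_min (Real.rpow_nonneg hu β) zero_le_one
  rcases le_or_gt 1 (u ^ β) with h1 | h1
  · have h2 : min (r ^ β) 1 ≤ 1 := min_le_right _ _
    rw [min_eq_right h1]
    linarith
  rcases le_or_gt 1 (v ^ β) with h2 | h2
  · have h3 : min (r ^ β) 1 ≤ 1 := min_le_right _ _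
    rw [min_eq_right h2]
    linarith
  calc min (r ^ β) 1 ≤ r ^ β := min_le_left _ _
    _ ≤ (u + v) ^ β := Real.rpow_le_rpow hr h hβ0
    _ ≤ u ^ β + v ^ β := by
        have key : ((u.toNNReal + v.toNNReal) ^ β : NNReal) ≤
            u.toNNReal ^ β + v.toNNReal ^ β :=
          NNReal.rpow_add_le_add_rpow _ _ hβ0 hβ1
        have := NNReal.coe_le_coe.mpr key
        rwa [NNReal.coe_rpow, NNReal.coe_add, NNReal.coe_add, NNReal.coe_rpow, NNReal.coe_rpow,
          Real.coe_toNNReal u hu, Real.coe_toNNReal v hv] at this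
    _ ≤ min (u ^ β) 1 + min (v ^ β) 1 := by
        rw [min_eq_left h1.le, min_eq_left h2.le]

lemma min_mul_min {β₁ β₂ r : ℝ} (h1 : 0 ≤ β₁) (h2 : 0 ≤ β₂) (hr : 0 ≤ r) :
    min (r ^ β₁) 1 * min (r ^ β₂) 1 ≤ min (r ^ (β₁ + β₂)) 1 := by
  rcases (add_nonneg h1 h2).eq_or_lt with h0 | h0
  · have hb1 : β₁ = 0 := by linarith
    have hb2 : β₂ = 0 := by linarith
    simp [hb1, hb2]
  · apply le_min
    · calc min (r ^ β₁) 1 * min (r ^ β₂) 1 ≤ r ^ β₁ * r ^ β₂ :=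
          mul_le_mul (min_le_left _ _) (min_le_left _ _)
            (le_min (Real.rpow_nonneg hr β₂) zero_le_one) (Real.rpow_nonneg hr β₁)
        _ = r ^ (β₁ + β₂) := (Real.rpow_add' hr h0.ne').symm
    · calc min (r ^ β₁) 1 * min (r ^ β₂) 1 ≤ 1 * 1 :=
          mul_le_mul (min_le_right _ _) (min_le_right _ _)
            (le_min (Real.rpow_nonneg hr β₂) zero_le_one) zero_le_one
        _ = 1 := one_mul 1

lemma kernel_prod_bound {p q M ee : ℝ} (hp : 0 < p) (hq : 0 < q) (hM : 0 < M)
    (h : M ≤ max p q) (he : ee ≤ 0) :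
    p ^ ee * q ^ ee ≤ M ^ ee * (p ^ ee + q ^ ee) := by
  have hp0 : 0 ≤ p ^ ee := Real.rpow_nonneg hp.le _
  have hq0 : 0 ≤ q ^ ee := Real.rpow_nonneg hq.le _
  rcases le_total p q with hpq | hpq
  · have hqM : q ^ ee ≤ M ^ ee :=
      Real.rpow_le_rpow_of_nonpos hM (le_trans h (by rw [max_eq_right hpq])) he
    calc p ^ ee * q ^ ee ≤ p ^ ee * M ^ ee := mul_le_mul_of_nonneg_left hqM hp0
      _ = M ^ ee * p ^ ee := by ring
      _ ≤ M ^ ee * (p ^ ee + q ^ ee) := by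
          have : 0 ≤ M ^ ee := Real.rpow_nonneg hM.le _
          nlinarith
  · have hpM : p ^ ee ≤ M ^ ee :=
      Real.rpow_le_rpow_of_nonpos hM (le_trans h (by rw [max_eq_left hpq])) he
    calc p ^ ee * q ^ ee ≤ M ^ ee * q ^ ee := mul_le_mul_of_nonneg_right hpM hq0
      _ ≤ M ^ ee * (p ^ ee + q ^ ee) := by
          have : 0 ≤ M ^ ee := Real.rpow_nonneg hM.le _
          nlinarith

lemma kernel_integral {d : ℕ} {α β b : ℝ} (hb : 0 < b) (hβα : β < α) :
    Integrable (fun z : EuclideanSpace ℝ (Fin d) => (b + ‖z‖) ^ (β - (d:ℝ) - α)) ∧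
    ∫ z : EuclideanSpace ℝ (Fin d), (b + ‖z‖) ^ (β - (d:ℝ) - α)
      = b ^ (β - α) * Jconst d α β := by
  have hfin : (finrank ℝ (EuclideanSpace ℝ (Fin d)) : ℝ) < (d:ℝ) + α - β := by
    rw [finrank_euclideanSpace_fin]; linarith
  have hexp : β - (d:ℝ) - α = -((d:ℝ) + α - β) := by ring
  have hg : Integrable (fun w : EuclideanSpace ℝ (Fin d) => (1 + ‖w‖) ^ (β - (d:ℝ) - α)) := by
    simp only [hexp]
    exact integrable_one_add_norm hfin
  have hkey : ∀ z : EuclideanSpace ℝ (Fin d),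
      (b + ‖z‖) ^ (β - (d:ℝ) - α) = b ^ (β - (d:ℝ) - α) * (1 + ‖b⁻¹ • z‖) ^ (β - (d:ℝ) - α) := by
    intro z
    rw [norm_smul, Real.norm_eq_abs, abs_of_pos (inv_pos.mpr hb),
      ← Real.mul_rpow hb.le (by positivity)]
    congr 1
    field_simp
  constructor
  · have h1 : Integrable (fun z : EuclideanSpace ℝ (Fin d) =>
        (1 + ‖b⁻¹ • z‖) ^ (β - (d:ℝ) - α)) :=
      (integrable_comp_smul_iff volume
        (fun w : EuclideanSpace ℝ (Fin d) => (1 + ‖w‖) ^ (β - (d:ℝ) - α))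
        (inv_ne_zero hb.ne')).mpr hg
    exact (h1.const_mul (b ^ (β - (d:ℝ) - α))).congr
      (Filter.Eventually.of_forall fun z => (hkey z).symm)
  · calc ∫ z : EuclideanSpace ℝ (Fin d), (b + ‖z‖) ^ (β - (d:ℝ) - α)
        = ∫ z : EuclideanSpace ℝ (Fin d),
            b ^ (β - (d:ℝ) - α) * (1 + ‖b⁻¹ • z‖) ^ (β - (d:ℝ) - α) := by simp only [hkey]
      _ = b ^ (β - (d:ℝ) - α) * ∫ z : EuclideanSpace ℝ (Fin d),
            (1 + ‖b⁻¹ • z‖) ^ (β - (d:ℝ) - α) := integral_const_mul _ _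
      _ = b ^ (β - (d:ℝ) - α) * (|b ^ finrank ℝ (EuclideanSpace ℝ (Fin d))| •
            ∫ w : EuclideanSpace ℝ (Fin d), (1 + ‖w‖) ^ (β - (d:ℝ) - α)) := by
          rw [Measure.integral_comp_inv_smul volume
            (fun w : EuclideanSpace ℝ (Fin d) => (1 + ‖w‖) ^ (β - (d:ℝ) - α)) b]
      _ = b ^ (β - α) * Jconst d α β := by
          rw [smul_eq_mul, abs_of_pos (pow_pos hb _), finrank_euclideanSpace_fin,
            ← Real.rpow_natCast b d, ← mul_assoc, ← Real.rpow_add hb, Jconst]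
          congr 2
          ring

/-- Integrability and bound for one convolution factor. -/
lemma conv_piece {d : ℕ} {α β b : ℝ} (hb : 0 < b) (hβ0 : 0 ≤ β) (hβα : β < α) :
    Integrable (fun z : EuclideanSpace ℝ (Fin d) =>
      min (‖z‖ ^ β) 1 * (b + ‖z‖) ^ (-(d:ℝ) - α)) ∧
    ∫ z : EuclideanSpace ℝ (Fin d), min (‖z‖ ^ β) 1 * (b + ‖z‖) ^ (-(d:ℝ) - α)
      ≤ Jconst d α β * b ^ (β - α) := by
  obtain ⟨hint, heq⟩ := kernel_integral (d := d) (α := α) (β := β) hb hβα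
  have hbd : ∀ z : EuclideanSpace ℝ (Fin d),
      min (‖z‖ ^ β) 1 * (b + ‖z‖) ^ (-(d:ℝ) - α) ≤ (b + ‖z‖) ^ (β - (d:ℝ) - α) := by
    intro z
    have hbz : (0:ℝ) < b + ‖z‖ := by positivity
    calc min (‖z‖ ^ β) 1 * (b + ‖z‖) ^ (-(d:ℝ) - α)
        ≤ (b + ‖z‖) ^ β * (b + ‖z‖) ^ (-(d:ℝ) - α) := by
          apply mul_le_mul_of_nonneg_right _ (Real.rpow_nonneg hbz.le _)
          calc min (‖z‖ ^ β) 1 ≤ ‖z‖ ^ β := min_le_left _ _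
            _ ≤ (b + ‖z‖) ^ β := Real.rpow_le_rpow (norm_nonneg z) (by linarith) hβ0
      _ = (b + ‖z‖) ^ (β - (d:ℝ) - α) := by
          rw [← Real.rpow_add hbz]
          congr 1
          ring
  have hnn : ∀ z : EuclideanSpace ℝ (Fin d),
      0 ≤ min (‖z‖ ^ β) 1 * (b + ‖z‖) ^ (-(d:ℝ) - α) := by
    intro z
    have : 0 ≤ min (‖z‖ ^ β) 1 := le_min (Real.rpow_nonneg (norm_nonneg z) β) zero_le_one
    positivity
  have hcont : Continuous (fun z : EuclideanSpace ℝ (Fin d) =>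
      min (‖z‖ ^ β) 1 * (b + ‖z‖) ^ (-(d:ℝ) - α)) := by
    apply Continuous.mul
    · exact (continuous_norm.rpow_const fun z => Or.inr hβ0).min continuous_const
    · exact (continuous_const.add continuous_norm).rpow_const fun z => Or.inl (add_pos_of_pos_of_nonneg hb (norm_nonneg z)).ne'
  constructor
  · refine hint.mono' hcont.aestronglyMeasurable (Filter.Eventually.of_forall fun z => ?_)
    rw [Real.norm_eq_abs, abs_of_nonneg (hnn z)]
    exact hbd z
  · calc ∫ z : EuclideanSpace ℝ (Fin d), min (‖z‖ ^ β) 1 * (b + ‖z‖) ^ (-(d:ℝ) - α)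
        ≤ ∫ z : EuclideanSpace ℝ (Fin d), (b + ‖z‖) ^ (β - (d:ℝ) - α) :=
          integral_mono_of_nonneg (Filter.Eventually.of_forall hnn) hint
            (Filter.Eventually.of_forall hbd)
      _ = Jconst d α β * b ^ (β - α) := by rw [heq]; ring

/-- convolution inequality for the functions `ϱ^β_γ`. -/
theorem stmt1 (d : ℕ) (hd : 1 ≤ d) (α β₁ β₂ : ℝ) (hα0 : 0 < α) (hα2 : α < 2)
    (hβ₁0 : 0 ≤ β₁) (hβ₁ : β₁ ≤ α / 4) (hβ₂0 : 0 ≤ β₂) (hβ₂ : β₂ ≤ α / 4) :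
    ∃ C > 0, ∀ (γ₁ γ₂ s t : ℝ) (x : EuclideanSpace ℝ (Fin d)),
      0 < s → s < t → t ≤ 1 →
      (∫ z : EuclideanSpace ℝ (Fin d), rho d α β₁ γ₁ (t - s) (x - z) * rho d α β₂ γ₂ s z) ≤
        C * (((t - s) ^ ((γ₁ + β₁ + β₂ - α) / α) * s ^ (γ₂ / α)
                + (t - s) ^ (γ₁ / α) * s ^ ((γ₂ + β₁ + β₂ - α) / α)) * rho d α 0 0 t x
              + (t - s) ^ ((γ₁ + β₁ - α) / α) * s ^ (γ₂ / α) * rho d α β₂ 0 t x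
              + (t - s) ^ (γ₁ / α) * s ^ ((γ₂ + β₂ - α) / α) * rho d α β₁ 0 t x) := by
  classical
  have hβ₁1 : β₁ ≤ 1 := by linarith
  have hβ₂1 : β₂ ≤ 1 := by linarith
  have hβ₁α : β₁ < α := by linarith
  have hβ₂α : β₂ < α := by linarith
  have hβ₁₂α : β₁ + β₂ < α := by linarith
  have hJnn₁ := Jconst_nonneg d α β₁
  have hJnn₂ := Jconst_nonneg d α β₂
  have hJnn₁₂ := Jconst_nonneg d α (β₁ + β₂)
  set Jsum : ℝ := Jconst d α β₁ + Jconst d α β₂ + Jconst d α (β₁ + β₂) + 1 with hJsum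
  have hJsum_pos : 0 < Jsum := by rw [hJsum]; linarith
  have hJ1 : Jconst d α β₁ ≤ Jsum := by rw [hJsum]; linarith
  have hJ2 : Jconst d α β₂ ≤ Jsum := by rw [hJsum]; linarith
  have hJ12 : Jconst d α (β₁ + β₂) ≤ Jsum := by rw [hJsum]; linarith
  set c₀ : ℝ := (2:ℝ) ^ (-(1/α)) with hc₀
  have hc₀pos : 0 < c₀ := Real.rpow_pos_of_pos two_pos _
  have hc₀le : c₀ ≤ 1 :=
    Real.rpow_le_one_of_one_le_of_nonpos one_le_two (neg_nonpos.mpr (by positivity))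
  have hee0 : -(d:ℝ) - α ≤ 0 := by
    have : (0:ℝ) ≤ (d:ℝ) := Nat.cast_nonneg d
    linarith
  set c₂ : ℝ := (c₀ / 2) ^ (-(d:ℝ) - α) with hc₂
  have hc₂pos : 0 < c₂ := Real.rpow_pos_of_pos (by positivity) _
  refine ⟨c₂ * Jsum, mul_pos hc₂pos hJsum_pos, ?_⟩
  intro γ₁ γ₂ s t x hs hst ht1
  have hu : 0 < t - s := sub_pos.mpr hst
  have ht : 0 < t := hs.trans hst
  set a : ℝ := (t - s) ^ (1/α) with ha
  set b : ℝ := s ^ (1/α) with hb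
  set T : ℝ := t ^ (1/α) with hT
  have hapos : 0 < a := Real.rpow_pos_of_pos hu _
  have hbpos : 0 < b := Real.rpow_pos_of_pos hs _
  have hTpos : 0 < T := Real.rpow_pos_of_pos ht _
  set M : ℝ := (c₀ / 2) * (T + ‖x‖) with hM
  have hMpos : 0 < M := by
    have h0 := norm_nonneg x
    rw [hM]
    positivity
  have hhalf : (t / 2) ^ (1/α) = c₀ * T := by
    rw [div_eq_mul_inv, Real.mul_rpow ht.le (by norm_num), hc₀, hT,
      Real.inv_rpow (by norm_num : (0:ℝ) ≤ 2), ← Real.rpow_neg (by norm_num : (0:ℝ) ≤ 2)]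
    ring
  have hab : c₀ * T ≤ a + b := by
    rcases le_total s (t - s) with h | h
    · have h2 : t / 2 ≤ t - s := by linarith
      have h3 := Real.rpow_le_rpow (by linarith : (0:ℝ) ≤ t / 2) h2 (by positivity : (0:ℝ) ≤ 1/α)
      rw [hhalf] at h3
      rw [← ha] at h3
      linarith
    · have h2 : t / 2 ≤ s := by linarith
      have h3 := Real.rpow_le_rpow (by linarith : (0:ℝ) ≤ t / 2) h2 (by positivity : (0:ℝ) ≤ 1/α)
      rw [hhalf] at h3
      rw [← hb] at h3
      linarith
  have hmax : ∀ z : EuclideanSpace ℝ (Fin d), M ≤ max (a + ‖x - z‖) (b + ‖z‖) := by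
    intro z
    have htri : ‖x‖ ≤ ‖x - z‖ + ‖z‖ := by
      calc ‖x‖ = ‖(x - z) + z‖ := by rw [sub_add_cancel]
        _ ≤ ‖x - z‖ + ‖z‖ := norm_add_le _ _
    have hx0 : 0 ≤ ‖x‖ := norm_nonneg x
    have hsum : 2 * M ≤ (a + ‖x - z‖) + (b + ‖z‖) := by
      have h1 : c₀ * ‖x‖ ≤ ‖x‖ := by nlinarith [mul_nonneg (sub_nonneg.mpr hc₀le) hx0]
      have h2 : 2 * M = c₀ * T + c₀ * ‖x‖ := by rw [hM]; ring
      linarith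
    rcases le_total (a + ‖x - z‖) (b + ‖z‖) with h | h
    · rw [max_eq_right h]; linarith
    · rw [max_eq_left h]; linarith
  set mx₁ : ℝ := min (‖x‖ ^ β₁) 1 with hmx₁
  set mx₂ : ℝ := min (‖x‖ ^ β₂) 1 with hmx₂
  have hmx₁nn : 0 ≤ mx₁ := le_min (Real.rpow_nonneg (norm_nonneg x) _) zero_le_one
  have hmx₂nn : 0 ≤ mx₂ := le_min (Real.rpow_nonneg (norm_nonneg x) _) zero_le_one
  obtain ⟨hint₁, hbd₁⟩ := conv_piece (d := d) (α := α) (β := β₁) hapos hβ₁0 hβ₁α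
  obtain ⟨hint₂, hbd₂⟩ := conv_piece (d := d) (α := α) (β := β₂) hbpos hβ₂0 hβ₂α
  obtain ⟨hint₁₂a, hbd₁₂a⟩ :=
    conv_piece (d := d) (α := α) (β := β₁ + β₂) hapos (by linarith) hβ₁₂α
  obtain ⟨hint₁₂b, hbd₁₂b⟩ :=
    conv_piece (d := d) (α := α) (β := β₁ + β₂) hbpos (by linarith) hβ₁₂α
  have hint₁' : Integrable (fun z : EuclideanSpace ℝ (Fin d) =>
      min (‖x - z‖ ^ β₁) 1 * (a + ‖x - z‖) ^ (-(d:ℝ) - α)) := hint₁.comp_sub_left x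
  have hint₁₂a' : Integrable (fun z : EuclideanSpace ℝ (Fin d) =>
      min (‖x - z‖ ^ (β₁ + β₂)) 1 * (a + ‖x - z‖) ^ (-(d:ℝ) - α)) := hint₁₂a.comp_sub_left x
  have hshift₁ : ∫ z : EuclideanSpace ℝ (Fin d),
      min (‖x - z‖ ^ β₁) 1 * (a + ‖x - z‖) ^ (-(d:ℝ) - α)
      = ∫ z : EuclideanSpace ℝ (Fin d), min (‖z‖ ^ β₁) 1 * (a + ‖z‖) ^ (-(d:ℝ) - α) :=
    integral_sub_left_eq_self
      (fun y : EuclideanSpace ℝ (Fin d) => min (‖y‖ ^ β₁) 1 * (a + ‖y‖) ^ (-(d:ℝ) - α)) volume x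
  have hshift₁₂ : ∫ z : EuclideanSpace ℝ (Fin d),
      min (‖x - z‖ ^ (β₁ + β₂)) 1 * (a + ‖x - z‖) ^ (-(d:ℝ) - α)
      = ∫ z : EuclideanSpace ℝ (Fin d), min (‖z‖ ^ (β₁ + β₂)) 1 * (a + ‖z‖) ^ (-(d:ℝ) - α) :=
    integral_sub_left_eq_self
      (fun y : EuclideanSpace ℝ (Fin d) =>
        min (‖y‖ ^ (β₁ + β₂)) 1 * (a + ‖y‖) ^ (-(d:ℝ) - α)) volume x
  set G : EuclideanSpace ℝ (Fin d) → ℝ := fun z => M ^ (-(d:ℝ) - α) *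
      (mx₁ * (min (‖z‖ ^ β₂) 1 * (b + ‖z‖) ^ (-(d:ℝ) - α))
        + min (‖z‖ ^ (β₁ + β₂)) 1 * (b + ‖z‖) ^ (-(d:ℝ) - α)
        + mx₂ * (min (‖x - z‖ ^ β₁) 1 * (a + ‖x - z‖) ^ (-(d:ℝ) - α))
        + min (‖x - z‖ ^ (β₁ + β₂)) 1 * (a + ‖x - z‖) ^ (-(d:ℝ) - α)) with hG
  have hGint : Integrable G := by
    simp only [hG]
    exact ((((hint₂.const_mul mx₁).add hint₁₂b).add (hint₁'.const_mul mx₂)).add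
      hint₁₂a').const_mul (M ^ (-(d:ℝ) - α))
  have hptwise : ∀ z : EuclideanSpace ℝ (Fin d),
      (min (‖x - z‖ ^ β₁) 1 * (a + ‖x - z‖) ^ (-(d:ℝ) - α))
        * (min (‖z‖ ^ β₂) 1 * (b + ‖z‖) ^ (-(d:ℝ) - α)) ≤ G z := by
    intro z
    have hp : (0:ℝ) < a + ‖x - z‖ := by positivity
    have hq : (0:ℝ) < b + ‖z‖ := by positivity
    have hm1 : 0 ≤ min (‖x - z‖ ^ β₁) 1 :=
      le_min (Real.rpow_nonneg (norm_nonneg _) _) zero_le_one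
    have hm2 : 0 ≤ min (‖z‖ ^ β₂) 1 :=
      le_min (Real.rpow_nonneg (norm_nonneg _) _) zero_le_one
    have hpnn : 0 ≤ (a + ‖x - z‖) ^ (-(d:ℝ) - α) := Real.rpow_nonneg hp.le _
    have hqnn : 0 ≤ (b + ‖z‖) ^ (-(d:ℝ) - α) := Real.rpow_nonneg hq.le _
    have hMnn : 0 ≤ M ^ (-(d:ℝ) - α) := Real.rpow_nonneg hMpos.le _
    have hk := kernel_prod_bound hp hq hMpos (hmax z) hee0
    have step1 : min (‖x - z‖ ^ β₁) 1 * min (‖z‖ ^ β₂) 1 * (b + ‖z‖) ^ (-(d:ℝ) - α)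
        ≤ (mx₁ * (min (‖z‖ ^ β₂) 1 * (b + ‖z‖) ^ (-(d:ℝ) - α))
            + min (‖z‖ ^ (β₁ + β₂)) 1 * (b + ‖z‖) ^ (-(d:ℝ) - α)) := by
      have hsub : min (‖x - z‖ ^ β₁) 1 ≤ mx₁ + min (‖z‖ ^ β₁) 1 :=
        min_rpow_subadd hβ₁0 hβ₁1 (norm_nonneg x) (norm_nonneg z) (norm_nonneg _)
          (norm_sub_le x z)
      have hmm : min (‖z‖ ^ β₁) 1 * min (‖z‖ ^ β₂) 1 ≤ min (‖z‖ ^ (β₁ + β₂)) 1 :=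
        min_mul_min hβ₁0 hβ₂0 (norm_nonneg z)
      have h1 : min (‖x - z‖ ^ β₁) 1 * min (‖z‖ ^ β₂) 1
          ≤ mx₁ * min (‖z‖ ^ β₂) 1 + min (‖z‖ ^ (β₁ + β₂)) 1 := by
        calc min (‖x - z‖ ^ β₁) 1 * min (‖z‖ ^ β₂) 1
            ≤ (mx₁ + min (‖z‖ ^ β₁) 1) * min (‖z‖ ^ β₂) 1 :=
              mul_le_mul_of_nonneg_right hsub hm2
          _ = mx₁ * min (‖z‖ ^ β₂) 1 + min (‖z‖ ^ β₁) 1 * min (‖z‖ ^ β₂) 1 := by ring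
          _ ≤ mx₁ * min (‖z‖ ^ β₂) 1 + min (‖z‖ ^ (β₁ + β₂)) 1 := add_le_add (le_refl _) hmm
      calc min (‖x - z‖ ^ β₁) 1 * min (‖z‖ ^ β₂) 1 * (b + ‖z‖) ^ (-(d:ℝ) - α)
          ≤ (mx₁ * min (‖z‖ ^ β₂) 1 + min (‖z‖ ^ (β₁ + β₂)) 1) * (b + ‖z‖) ^ (-(d:ℝ) - α) :=
            mul_le_mul_of_nonneg_right h1 hqnn
        _ = mx₁ * (min (‖z‖ ^ β₂) 1 * (b + ‖z‖) ^ (-(d:ℝ) - α))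
            + min (‖z‖ ^ (β₁ + β₂)) 1 * (b + ‖z‖) ^ (-(d:ℝ) - α) := by ring
    have step2 : min (‖x - z‖ ^ β₁) 1 * min (‖z‖ ^ β₂) 1 * (a + ‖x - z‖) ^ (-(d:ℝ) - α)
        ≤ (mx₂ * (min (‖x - z‖ ^ β₁) 1 * (a + ‖x - z‖) ^ (-(d:ℝ) - α))
            + min (‖x - z‖ ^ (β₁ + β₂)) 1 * (a + ‖x - z‖) ^ (-(d:ℝ) - α)) := by
      have htri : ‖z‖ ≤ ‖x‖ + ‖x - z‖ := by
        calc ‖z‖ = ‖x - (x - z)‖ := by rw [sub_sub_cancel]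
          _ ≤ ‖x‖ + ‖x - z‖ := norm_sub_le _ _
      have hsub : min (‖z‖ ^ β₂) 1 ≤ mx₂ + min (‖x - z‖ ^ β₂) 1 :=
        min_rpow_subadd hβ₂0 hβ₂1 (norm_nonneg x) (norm_nonneg _) (norm_nonneg z) htri
      have hmm : min (‖x - z‖ ^ β₁) 1 * min (‖x - z‖ ^ β₂) 1
          ≤ min (‖x - z‖ ^ (β₁ + β₂)) 1 := min_mul_min hβ₁0 hβ₂0 (norm_nonneg _)
      have h1 : min (‖x - z‖ ^ β₁) 1 * min (‖z‖ ^ β₂) 1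
          ≤ mx₂ * min (‖x - z‖ ^ β₁) 1 + min (‖x - z‖ ^ (β₁ + β₂)) 1 := by
        calc min (‖x - z‖ ^ β₁) 1 * min (‖z‖ ^ β₂) 1
            ≤ min (‖x - z‖ ^ β₁) 1 * (mx₂ + min (‖x - z‖ ^ β₂) 1) :=
              mul_le_mul_of_nonneg_left hsub hm1
          _ = mx₂ * min (‖x - z‖ ^ β₁) 1 + min (‖x - z‖ ^ β₁) 1 * min (‖x - z‖ ^ β₂) 1 := by
              ring
          _ ≤ mx₂ * min (‖x - z‖ ^ β₁) 1 + min (‖x - z‖ ^ (β₁ + β₂)) 1 := add_le_add (le_refl _) hmm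
      calc min (‖x - z‖ ^ β₁) 1 * min (‖z‖ ^ β₂) 1 * (a + ‖x - z‖) ^ (-(d:ℝ) - α)
          ≤ (mx₂ * min (‖x - z‖ ^ β₁) 1 + min (‖x - z‖ ^ (β₁ + β₂)) 1)
              * (a + ‖x - z‖) ^ (-(d:ℝ) - α) := mul_le_mul_of_nonneg_right h1 hpnn
        _ = mx₂ * (min (‖x - z‖ ^ β₁) 1 * (a + ‖x - z‖) ^ (-(d:ℝ) - α))
            + min (‖x - z‖ ^ (β₁ + β₂)) 1 * (a + ‖x - z‖) ^ (-(d:ℝ) - α) := by ring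
    calc (min (‖x - z‖ ^ β₁) 1 * (a + ‖x - z‖) ^ (-(d:ℝ) - α))
          * (min (‖z‖ ^ β₂) 1 * (b + ‖z‖) ^ (-(d:ℝ) - α))
        = (min (‖x - z‖ ^ β₁) 1 * min (‖z‖ ^ β₂) 1)
            * ((a + ‖x - z‖) ^ (-(d:ℝ) - α) * (b + ‖z‖) ^ (-(d:ℝ) - α)) := by ring
      _ ≤ (min (‖x - z‖ ^ β₁) 1 * min (‖z‖ ^ β₂) 1)
            * (M ^ (-(d:ℝ) - α) * ((a + ‖x - z‖) ^ (-(d:ℝ) - α) + (b + ‖z‖) ^ (-(d:ℝ) - α))) :=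
          mul_le_mul_of_nonneg_left hk (mul_nonneg hm1 hm2)
      _ = M ^ (-(d:ℝ) - α) * (min (‖x - z‖ ^ β₁) 1 * min (‖z‖ ^ β₂) 1 * (b + ‖z‖) ^ (-(d:ℝ) - α)
            + min (‖x - z‖ ^ β₁) 1 * min (‖z‖ ^ β₂) 1 * (a + ‖x - z‖) ^ (-(d:ℝ) - α)) := by
          ring
      _ ≤ G z := by
          simp only [hG]
          apply mul_le_mul_of_nonneg_left _ hMnn
          exact le_trans (add_le_add step1 step2) (le_of_eq (by ring))
  have hgnn : ∀ z : EuclideanSpace ℝ (Fin d),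
      0 ≤ (min (‖x - z‖ ^ β₁) 1 * (a + ‖x - z‖) ^ (-(d:ℝ) - α))
        * (min (‖z‖ ^ β₂) 1 * (b + ‖z‖) ^ (-(d:ℝ) - α)) := by
    intro z
    have hm1 : 0 ≤ min (‖x - z‖ ^ β₁) 1 :=
      le_min (Real.rpow_nonneg (norm_nonneg _) _) zero_le_one
    have hm2 : 0 ≤ min (‖z‖ ^ β₂) 1 :=
      le_min (Real.rpow_nonneg (norm_nonneg _) _) zero_le_one
    have hp : (0:ℝ) < a + ‖x - z‖ := by positivity
    have hq : (0:ℝ) < b + ‖z‖ := by positivity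
    have h1 := Real.rpow_nonneg hp.le (-(d:ℝ) - α)
    have h2 := Real.rpow_nonneg hq.le (-(d:ℝ) - α)
    positivity
  have hIbound : (∫ z : EuclideanSpace ℝ (Fin d),
      (min (‖x - z‖ ^ β₁) 1 * (a + ‖x - z‖) ^ (-(d:ℝ) - α))
        * (min (‖z‖ ^ β₂) 1 * (b + ‖z‖) ^ (-(d:ℝ) - α)))
      ≤ M ^ (-(d:ℝ) - α) * (mx₁ * (Jconst d α β₂ * b ^ (β₂ - α))
          + Jconst d α (β₁ + β₂) * b ^ (β₁ + β₂ - α)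
          + mx₂ * (Jconst d α β₁ * a ^ (β₁ - α))
          + Jconst d α (β₁ + β₂) * a ^ (β₁ + β₂ - α)) := by
    have hMnn : 0 ≤ M ^ (-(d:ℝ) - α) := Real.rpow_nonneg hMpos.le _
    calc (∫ z : EuclideanSpace ℝ (Fin d),
        (min (‖x - z‖ ^ β₁) 1 * (a + ‖x - z‖) ^ (-(d:ℝ) - α))
          * (min (‖z‖ ^ β₂) 1 * (b + ‖z‖) ^ (-(d:ℝ) - α)))
        ≤ ∫ z : EuclideanSpace ℝ (Fin d), G z :=
          integral_mono_of_nonneg (Filter.Eventually.of_forall hgnn) hGint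
            (Filter.Eventually.of_forall hptwise)
      _ = M ^ (-(d:ℝ) - α) * (mx₁ * (∫ z : EuclideanSpace ℝ (Fin d),
              min (‖z‖ ^ β₂) 1 * (b + ‖z‖) ^ (-(d:ℝ) - α))
            + (∫ z : EuclideanSpace ℝ (Fin d),
              min (‖z‖ ^ (β₁ + β₂)) 1 * (b + ‖z‖) ^ (-(d:ℝ) - α))
            + mx₂ * (∫ z : EuclideanSpace ℝ (Fin d),
              min (‖x - z‖ ^ β₁) 1 * (a + ‖x - z‖) ^ (-(d:ℝ) - α))
            + ∫ z : EuclideanSpace ℝ (Fin d),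
              min (‖x - z‖ ^ (β₁ + β₂)) 1 * (a + ‖x - z‖) ^ (-(d:ℝ) - α)) := by
          have iA : Integrable (fun z : EuclideanSpace ℝ (Fin d) =>
              mx₁ * (min (‖z‖ ^ β₂) 1 * (b + ‖z‖) ^ (-(d:ℝ) - α))) := hint₂.const_mul mx₁
          have iC : Integrable (fun z : EuclideanSpace ℝ (Fin d) =>
              mx₂ * (min (‖x - z‖ ^ β₁) 1 * (a + ‖x - z‖) ^ (-(d:ℝ) - α))) :=
            hint₁'.const_mul mx₂
          have iAB : Integrable (fun z : EuclideanSpace ℝ (Fin d) =>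
              mx₁ * (min (‖z‖ ^ β₂) 1 * (b + ‖z‖) ^ (-(d:ℝ) - α))
                + min (‖z‖ ^ (β₁ + β₂)) 1 * (b + ‖z‖) ^ (-(d:ℝ) - α)) := iA.add hint₁₂b
          have iABC : Integrable (fun z : EuclideanSpace ℝ (Fin d) =>
              mx₁ * (min (‖z‖ ^ β₂) 1 * (b + ‖z‖) ^ (-(d:ℝ) - α))
                + min (‖z‖ ^ (β₁ + β₂)) 1 * (b + ‖z‖) ^ (-(d:ℝ) - α)
                + mx₂ * (min (‖x - z‖ ^ β₁) 1 * (a + ‖x - z‖) ^ (-(d:ℝ) - α))) := iAB.add iC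
          simp only [hG]
          rw [integral_const_mul]
          congr 1
          rw [integral_add iABC hint₁₂a', integral_add iAB iC, integral_add iA hint₁₂b,
            integral_const_mul, integral_const_mul]
      _ ≤ M ^ (-(d:ℝ) - α) * (mx₁ * (Jconst d α β₂ * b ^ (β₂ - α))
            + Jconst d α (β₁ + β₂) * b ^ (β₁ + β₂ - α)
            + mx₂ * (Jconst d α β₁ * a ^ (β₁ - α))
            + Jconst d α (β₁ + β₂) * a ^ (β₁ + β₂ - α)) := by
          apply mul_le_mul_of_nonneg_left _ hMnn
          rw [hshift₁, hshift₁₂]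
          have e1 := mul_le_mul_of_nonneg_left hbd₂ hmx₁nn
          have e2 := mul_le_mul_of_nonneg_left hbd₁ hmx₂nn
          exact add_le_add (add_le_add (add_le_add e1 hbd₁₂b) e2) hbd₁₂a
  have hLHS : (∫ z : EuclideanSpace ℝ (Fin d), rho d α β₁ γ₁ (t - s) (x - z)
      * rho d α β₂ γ₂ s z)
      = ((t - s) ^ (γ₁ / α) * s ^ (γ₂ / α)) * ∫ z : EuclideanSpace ℝ (Fin d),
        (min (‖x - z‖ ^ β₁) 1 * (a + ‖x - z‖) ^ (-(d:ℝ) - α))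
          * (min (‖z‖ ^ β₂) 1 * (b + ‖z‖) ^ (-(d:ℝ) - α)) := by
    rw [← integral_const_mul]
    congr 1
    funext z
    simp only [rho, ← ha, ← hb]
    ring
  have hpow : ∀ (c : ℝ), 0 < c → ∀ (γ δ : ℝ),
      c ^ (γ / α) * (c ^ (1/α)) ^ δ = c ^ ((γ + δ) / α) := by
    intro c hc γ δ
    rw [← Real.rpow_mul hc.le, ← Real.rpow_add hc]
    congr 1
    field_simp
  have ea1 : (t - s) ^ (γ₁ / α) * a ^ (β₁ + β₂ - α) = (t - s) ^ ((γ₁ + β₁ + β₂ - α) / α) := by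
    rw [ha, hpow (t - s) hu γ₁ (β₁ + β₂ - α)]
    congr 1
    ring
  have ea2 : (t - s) ^ (γ₁ / α) * a ^ (β₁ - α) = (t - s) ^ ((γ₁ + β₁ - α) / α) := by
    rw [ha, hpow (t - s) hu γ₁ (β₁ - α)]
    congr 1
    ring
  have eb1 : s ^ (γ₂ / α) * b ^ (β₁ + β₂ - α) = s ^ ((γ₂ + β₁ + β₂ - α) / α) := by
    rw [hb, hpow s hs γ₂ (β₁ + β₂ - α)]
    congr 1
    ring
  have eb2 : s ^ (γ₂ / α) * b ^ (β₂ - α) = s ^ ((γ₂ + β₂ - α) / α) := by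
    rw [hb, hpow s hs γ₂ (β₂ - α)]
    congr 1
    ring
  have hMee : M ^ (-(d:ℝ) - α) = c₂ * (T + ‖x‖) ^ (-(d:ℝ) - α) := by
    rw [hM, Real.mul_rpow (by positivity) (by positivity), hc₂]
  have hcore : mx₁ * (Jconst d α β₂ * b ^ (β₂ - α))
      + Jconst d α (β₁ + β₂) * b ^ (β₁ + β₂ - α)
      + mx₂ * (Jconst d α β₁ * a ^ (β₁ - α))
      + Jconst d α (β₁ + β₂) * a ^ (β₁ + β₂ - α)
      ≤ Jsum * (a ^ (β₁ + β₂ - α) + b ^ (β₁ + β₂ - α)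
          + mx₂ * a ^ (β₁ - α) + mx₁ * b ^ (β₂ - α)) := by
    have hannβ : ∀ δ : ℝ, 0 ≤ a ^ δ := fun δ => Real.rpow_nonneg hapos.le _
    have hbnnβ : ∀ δ : ℝ, 0 ≤ b ^ δ := fun δ => Real.rpow_nonneg hbpos.le _
    have e1 := mul_le_mul_of_nonneg_right hJ2 (mul_nonneg hmx₁nn (hbnnβ (β₂ - α)))
    have e2 := mul_le_mul_of_nonneg_right hJ12 (hbnnβ (β₁ + β₂ - α))
    have e3 := mul_le_mul_of_nonneg_right hJ1 (mul_nonneg hmx₂nn (hannβ (β₁ - α)))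
    have e4 := mul_le_mul_of_nonneg_right hJ12 (hannβ (β₁ + β₂ - α))
    calc mx₁ * (Jconst d α β₂ * b ^ (β₂ - α))
        + Jconst d α (β₁ + β₂) * b ^ (β₁ + β₂ - α)
        + mx₂ * (Jconst d α β₁ * a ^ (β₁ - α))
        + Jconst d α (β₁ + β₂) * a ^ (β₁ + β₂ - α)
        = Jconst d α β₂ * (mx₁ * b ^ (β₂ - α)) + Jconst d α (β₁ + β₂) * b ^ (β₁ + β₂ - α)
          + (Jconst d α β₁ * (mx₂ * a ^ (β₁ - α))
            + Jconst d α (β₁ + β₂) * a ^ (β₁ + β₂ - α)) := by ring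
      _ ≤ Jsum * (mx₁ * b ^ (β₂ - α)) + Jsum * b ^ (β₁ + β₂ - α)
          + (Jsum * (mx₂ * a ^ (β₁ - α)) + Jsum * a ^ (β₁ + β₂ - α)) :=
        add_le_add (add_le_add e1 e2) (add_le_add e3 e4)
      _ = Jsum * (a ^ (β₁ + β₂ - α) + b ^ (β₁ + β₂ - α)
          + mx₂ * a ^ (β₁ - α) + mx₁ * b ^ (β₂ - α)) := by ring
  have hrho0 : rho d α 0 0 t x = (T + ‖x‖) ^ (-(d:ℝ) - α) := by
    simp only [rho, zero_div, Real.rpow_zero, min_self, one_mul, ← hT]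
  have hrho1 : rho d α β₁ 0 t x = mx₁ * (T + ‖x‖) ^ (-(d:ℝ) - α) := by
    simp only [rho, zero_div, Real.rpow_zero, one_mul, ← hT, ← hmx₁]
  have hrho2 : rho d α β₂ 0 t x = mx₂ * (T + ‖x‖) ^ (-(d:ℝ) - α) := by
    simp only [rho, zero_div, Real.rpow_zero, one_mul, ← hT, ← hmx₂]
  have hPnn : 0 ≤ (t - s) ^ (γ₁ / α) * s ^ (γ₂ / α) :=
    mul_nonneg (Real.rpow_nonneg hu.le _) (Real.rpow_nonneg hs.le _)
  rw [hLHS]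
  calc ((t - s) ^ (γ₁ / α) * s ^ (γ₂ / α)) * ∫ z : EuclideanSpace ℝ (Fin d),
      (min (‖x - z‖ ^ β₁) 1 * (a + ‖x - z‖) ^ (-(d:ℝ) - α))
        * (min (‖z‖ ^ β₂) 1 * (b + ‖z‖) ^ (-(d:ℝ) - α))
      ≤ ((t - s) ^ (γ₁ / α) * s ^ (γ₂ / α)) *
        (M ^ (-(d:ℝ) - α) * (mx₁ * (Jconst d α β₂ * b ^ (β₂ - α))
          + Jconst d α (β₁ + β₂) * b ^ (β₁ + β₂ - α)
          + mx₂ * (Jconst d α β₁ * a ^ (β₁ - α))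
          + Jconst d α (β₁ + β₂) * a ^ (β₁ + β₂ - α))) :=
        mul_le_mul_of_nonneg_left hIbound hPnn
    _ ≤ ((t - s) ^ (γ₁ / α) * s ^ (γ₂ / α)) *
        (M ^ (-(d:ℝ) - α) * (Jsum * (a ^ (β₁ + β₂ - α) + b ^ (β₁ + β₂ - α)
          + mx₂ * a ^ (β₁ - α) + mx₁ * b ^ (β₂ - α)))) := by
        apply mul_le_mul_of_nonneg_left _ hPnn
        exact mul_le_mul_of_nonneg_left hcore (Real.rpow_nonneg hMpos.le _)
    _ = (c₂ * Jsum) * ((((t - s) ^ (γ₁ / α) * a ^ (β₁ + β₂ - α)) * s ^ (γ₂ / α)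
          + (t - s) ^ (γ₁ / α) * (s ^ (γ₂ / α) * b ^ (β₁ + β₂ - α)))
            * (T + ‖x‖) ^ (-(d:ℝ) - α)
        + ((t - s) ^ (γ₁ / α) * a ^ (β₁ - α)) * s ^ (γ₂ / α)
            * (mx₂ * (T + ‖x‖) ^ (-(d:ℝ) - α))
        + (t - s) ^ (γ₁ / α) * (s ^ (γ₂ / α) * b ^ (β₂ - α))
            * (mx₁ * (T + ‖x‖) ^ (-(d:ℝ) - α))) := by
        rw [hMee]
        ring
    _ = (c₂ * Jsum) * (((t - s) ^ ((γ₁ + β₁ + β₂ - α) / α) * s ^ (γ₂ / α)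
          + (t - s) ^ (γ₁ / α) * s ^ ((γ₂ + β₁ + β₂ - α) / α)) * rho d α 0 0 t x
        + (t - s) ^ ((γ₁ + β₁ - α) / α) * s ^ (γ₂ / α) * rho d α β₂ 0 t x
        + (t - s) ^ (γ₁ / α) * s ^ ((γ₂ + β₂ - α) / α) * rho d α β₁ 0 t x) := by
        rw [hrho0, hrho1, hrho2, ea1, ea2, eb1, eb2]
end
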